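/- Let k have characteristic 2, V a symplectic k-vector space with symplectic form (,), Q a quadratic form on V with associated endomorphism A = A_Q, and suppose V ≠ 0 and A is nilpotent. Define e as the smallest integer ≥ 1 with A^e = 0, and f as the smallest integer ≥ 0 with Q(A^f x) = 0 for all x ∈ V. Then e ≤ 2f + 1. -/

import Mathlib

/-- char 2, `V ≠ 0` a symplectic space, `Q` a quadratic form with
nilpotent associated endomorphism `A`.  If `e ≥ 1` is minimal with `A^e = 0` and
`f ≥ 0` is minimal with `Q ∘ A^f = 0`, then `e ≤ 2f + 1`. -/
theorem e_le_two_f_add_one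
    (k V : Type*) [Field k] [CharP k 2] [AddCommGroup V] [Module k V]
    [FiniteDimensional k V] (hV : Nontrivial V)
    (B : LinearMap.BilinForm k V) (halt : B.IsAlt) (hnd : B.Nondegenerate)
    (Q : QuadraticForm k V) (A : Module.End k V)
    (hA : ∀ x y : V, Q (x + y) - Q x - Q y = B (A x) y)
    (hnil : IsNilpotent A)
    (e f : ℕ)
    (he1 : 1 ≤ e) (heA : A ^ e = 0)
    (hemin : ∀ m : ℕ, 1 ≤ m → A ^ m = 0 → e ≤ m)
    (hfQ : ∀ x : V, Q ((A ^ f) x) = 0)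
    (hfmin : ∀ m : ℕ, (∀ x : V, Q ((A ^ m) x) = 0) → f ≤ m) :
    e ≤ 2 * f + 1 := by
  -- A is self-adjoint.
  have hsa : ∀ x y : V, B (A x) y = B x (A y) := by
    intro x y
    have h1 := hA x y
    have h2 := hA y x
    rw [add_comm y x] at h2
    have : B (A x) y = B (A y) x := by rw [← h1, ← h2]; ring
    rw [this]
    exact (halt.neg_eq x (A y)).symm.trans (CharTwo.neg_eq _)
  have hpow : ∀ (n : ℕ) (x y : V), B ((A ^ n) x) y = B x ((A ^ n) y) := by
    intro n
    induction n with
    | zero => simp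
    | succ m ih =>
      intro x y
      have h1 : (A ^ (m + 1)) x = (A ^ m) (A x) := by
        rw [pow_succ, Module.End.mul_apply]
      have h2 : (A ^ (m + 1)) y = A ((A ^ m) y) := by
        rw [pow_succ', Module.End.mul_apply]
      rw [h1, ih, hsa, h2]
  -- A^(2f+1) = 0
  have hkey : A ^ (2 * f + 1) = 0 := by
    ext x
    simp only [LinearMap.zero_apply]
    apply hnd.1
    intro y
    have h1 : (A ^ (2 * f + 1)) x = (A ^ f) ((A ^ (f + 1)) x) := by
      rw [← Module.End.mul_apply, ← pow_add]
      congr 1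
      ring
    have h2 : (A ^ (f + 1)) x = A ((A ^ f) x) := by
      rw [pow_succ', Module.End.mul_apply]
    rw [h1, hpow f, h2, ← hA,
      show (A ^ f) x + (A ^ f) y = (A ^ f) (x + y) from (map_add _ _ _).symm]
    simp only [hfQ, sub_zero]
  exact hemin _ (Nat.le_add_left 1 (2 * f)) hkey
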